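/- Let G be a graph whose vertex set is partitioned into n pairs (color classes) P₁, ..., Pₙ, with edges only between different pairs. Suppose pairs A = {a₁,a₂} and B = {b₁,b₂} admit a unique perfect matching in G, say a₁b₁, a₂b₂. Form G' by replacing A and B with a new pair C = {c₁, c₂}, where a vertex v ∉ A ∪ B is adjacent to cᵢ iff v is adjacent to both aᵢ and bᵢ in G. Then the vertex set of G can be partitioned into two cliques each containing exactly one vertex per pair if and only if the vertex set of G' can be so partitioned. -/
import Mathlib


/-- Correctness of the contraction step: if the pairs A and B have the unique perfect
matching `(A,k)–(B,k)`, and G' is obtained by replacing A and B by a contracted pair C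
(placed at index A, with B removed), then G has a partition into two colorful cliques
iff G' does. -/
theorem contraction_correct (ι : Type*) [DecidableEq ι]
    (G : SimpleGraph (ι × Fin 2))
    (hno : ∀ (i : ι) (a b : Fin 2), ¬ G.Adj (i, a) (i, b))
    (A B : ι) (hAB : A ≠ B)
    (hm1 : ∀ k : Fin 2, G.Adj (A, k) (B, k))
    (hm2 : ¬ (G.Adj (A, 0) (B, 1) ∧ G.Adj (A, 1) (B, 0)))
    (G' : SimpleGraph ({i : ι // i ≠ B} × Fin 2))
    (hG' : ∀ v w : {i : ι // i ≠ B} × Fin 2, G'.Adj v w ↔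
      ((v.1.val ≠ A ∧ w.1.val ≠ A ∧ G.Adj (v.1.val, v.2) (w.1.val, w.2)) ∨
       (v.1.val ≠ A ∧ w.1.val = A ∧
          G.Adj (v.1.val, v.2) (A, w.2) ∧ G.Adj (v.1.val, v.2) (B, w.2)) ∨
       (v.1.val = A ∧ w.1.val ≠ A ∧
          G.Adj (w.1.val, w.2) (A, v.2) ∧ G.Adj (w.1.val, w.2) (B, v.2)))) :
    (∃ f : ι × Fin 2 → Fin 2,
        (∀ (i : ι) (a b : Fin 2), a ≠ b → f (i, a) ≠ f (i, b)) ∧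
        (∀ v w : ι × Fin 2, v.1 ≠ w.1 → f v = f w → G.Adj v w)) ↔
    (∃ g : {i : ι // i ≠ B} × Fin 2 → Fin 2,
        (∀ (i : {i : ι // i ≠ B}) (a b : Fin 2), a ≠ b → g (i, a) ≠ g (i, b)) ∧
        (∀ v w : {i : ι // i ≠ B} × Fin 2, v.1 ≠ w.1 → g v = g w → G'.Adj v w)) := by
  have two : ∀ x y z : Fin 2, x ≠ y → z ≠ y → x = z := by decide
  constructor
  · rintro ⟨f, hf1, hf2⟩
    have e01 : f (B, 0) ≠ f (B, 1) := hf1 B 0 1 (by decide)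
    have key : ∀ k, f (A, k) = f (B, k) := by
      have h0 : f (A, 0) = f (B, 0) := by
        by_contra h0
        have h1 : f (A, 0) = f (B, 1) := two _ _ _ h0 (Ne.symm e01)
        have h2 : f (A, 1) ≠ f (B, 1) := by
          intro h
          exact hf1 A 0 1 (by decide) (h1.trans h.symm)
        have h3 : f (A, 1) = f (B, 0) := two _ _ _ h2 e01
        exact hm2 ⟨hf2 (A, 0) (B, 1) hAB h1, hf2 (A, 1) (B, 0) hAB h3⟩
      intro k
      fin_cases k
      · exact h0
      · have h2 : f (A, 1) ≠ f (B, 0) := by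
          intro h
          exact hf1 A 0 1 (by decide) (h0.trans h.symm)
        exact two _ _ _ h2 (Ne.symm e01)
    refine ⟨fun v => f (v.1.val, v.2), fun i a b hab => hf1 i.val a b hab, ?_⟩
    intro v w hvw heq
    simp only at heq
    have hval : v.1.val ≠ w.1.val := fun h => hvw (Subtype.ext h)
    rw [hG']
    by_cases hvA : v.1.val = A <;> by_cases hwA : w.1.val = A
    · exact absurd (hvA.trans hwA.symm) hval
    · refine Or.inr (Or.inr ⟨hvA, hwA, ?_, ?_⟩)
      · refine hf2 _ _ (by simpa [hvA] using hval.symm) ?_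
        simpa [hvA] using heq.symm
      · refine hf2 _ _ w.1.2 ?_
        rw [← heq, show (v.1.val : ι) = A from hvA, key]
    · refine Or.inr (Or.inl ⟨hvA, hwA, ?_, ?_⟩)
      · refine hf2 _ _ (by simpa [hwA] using hval) ?_
        simpa [hwA] using heq
      · refine hf2 _ _ v.1.2 ?_
        rw [heq, show (w.1.val : ι) = A from hwA, key]
    · exact Or.inl ⟨hvA, hwA, hf2 _ _ hval heq⟩
  · rintro ⟨g, hg1, hg2⟩
    refine ⟨fun v => if h : v.1 = B then g (⟨A, hAB⟩, v.2) else g (⟨v.1, h⟩, v.2), ?_, ?_⟩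
    · intro i a b hab
      by_cases h : i = B
      · simp only [dif_pos h]; exact hg1 _ a b hab
      · simp only [dif_neg h]; exact hg1 _ a b hab
    · rintro ⟨i, a⟩ ⟨j, b⟩ hne heq
      simp only at hne heq
      by_cases hi : i = B <;> by_cases hj : j = B
      · exact absurd (hi.trans hj.symm) hne
      · -- i = B, j ≠ B
        rw [dif_pos hi, dif_neg hj] at heq
        by_cases hjA : j = A
        · have hsub : (⟨j, hj⟩ : {i : ι // i ≠ B}) = ⟨A, hAB⟩ := Subtype.ext hjA
          rw [hsub] at heq
          have hab : a = b := by
            by_contra hab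
            exact hg1 ⟨A, hAB⟩ a b hab heq
          rw [hi, hjA, hab]
          exact (hm1 b).symm
        · have hne' : (⟨A, hAB⟩ : {i : ι // i ≠ B}) ≠ ⟨j, hj⟩ :=
            fun h => hjA (congrArg Subtype.val h).symm
          have hadj := hg2 _ _ hne' heq
          rw [hG'] at hadj
          rcases hadj with ⟨h1, _⟩ | ⟨h1, _⟩ | ⟨_, _, _, h4⟩
          · exact absurd rfl h1
          · exact absurd rfl h1
          · rw [hi]; exact h4.symm
      · -- i ≠ B, j = B
        rw [dif_neg hi, dif_pos hj] at heq
        by_cases hiA : i = A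
        · have hsub : (⟨i, hi⟩ : {i : ι // i ≠ B}) = ⟨A, hAB⟩ := Subtype.ext hiA
          rw [hsub] at heq
          have hab : a = b := by
            by_contra hab
            exact hg1 ⟨A, hAB⟩ a b hab heq
          rw [hj, hiA, hab]
          exact hm1 b
        · have hne' : (⟨i, hi⟩ : {i : ι // i ≠ B}) ≠ ⟨A, hAB⟩ :=
            fun h => hiA (congrArg Subtype.val h)
          have hadj := hg2 _ _ hne' heq
          rw [hG'] at hadj
          rcases hadj with ⟨_, h2, _⟩ | ⟨_, _, _, h4⟩ | ⟨h1, _⟩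
          · exact absurd rfl h2
          · rw [hj]; exact h4
          · exact absurd h1 hiA
      · rw [dif_neg hi, dif_neg hj] at heq
        have hne' : (⟨i, hi⟩ : {i : ι // i ≠ B}) ≠ ⟨j, hj⟩ :=
          fun h => hne (congrArg Subtype.val h)
        have hadj := hg2 _ _ hne' heq
        rw [hG'] at hadj
        rcases hadj with ⟨_, _, h3⟩ | ⟨_, h2, h3, _⟩ | ⟨h1, _, h3, _⟩
        · exact h3
        · rwa [← h2] at h3
        · rw [show i = A from h1]; exact h3.symm
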